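/- Let A be the arrangement cell attached to an arrangement on n points, and let π, φ, π', φ' be permutations of {1,…,n} such that p(π, φ) and p(π', φ') both lie in A. Then the straight-line path from p(π, φ) to p(π', φ') lies in OC_n, and it is homotopic relative to endpoints, through paths in OC_n, to the piecewise linear path that goes in a straight line from p(π, φ) to p(π', φ) and then in a straight line from p(π', φ) to p(π', φ'). -/
import Mathlib


/-- An arrangement on `n` points: a pair of strict partial orders on `Fin n`
such that any two distinct indices are comparable in at least one of them. -/
def IsArrangement {n : ℕ} (rRe rIm : Fin n → Fin n → Prop) : Prop :=
  (∀ i, ¬ rRe i i) ∧ (∀ i j k, rRe i j → rRe j k → rRe i k) ∧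
  (∀ i, ¬ rIm i i) ∧ (∀ i j k, rIm i j → rIm j k → rIm i k) ∧
  (∀ i j, i ≠ j → rRe i j ∨ rRe j i ∨ rIm i j ∨ rIm j i)

/-- The arrangement cell attached to a pair of relations. -/
def cell {n : ℕ} (rRe rIm : Fin n → Fin n → Prop) : Set (Fin n → ℂ) :=
  {z | (∀ i j, rRe i j → (z i).re < (z j).re) ∧
       (∀ i j, rIm i j → (z i).im < (z j).im)}

/-- The ordered configuration space of `n` points in `ℂ`. -/
def OC (n : ℕ) : Set (Fin n → ℂ) := {z | Function.Injective z}

/-- The permutation point `p(π, φ)`: `k`-th coordinate is `π(k) + φ(k)·i`,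
where `π(k), φ(k)` take values in `{1, …, n}`. -/
noncomputable def permPoint {n : ℕ} (π φ : Equiv.Perm (Fin n)) : Fin n → ℂ :=
  fun k => (((π k : ℕ) + 1 : ℝ) : ℂ) + (((φ k : ℕ) + 1 : ℝ) : ℂ) * Complex.I

/-- Straight-line segment from `a` to `b`, parametrized on `[0,1]`. -/
noncomputable def seg {n : ℕ} (a b : Fin n → ℂ) (t : ℝ) : Fin n → ℂ :=
  fun k => ((1 - t : ℝ) : ℂ) * a k + (t : ℂ) * b k

/-- The piecewise linear path `a → b → c`, parametrized on `[0,1]`. -/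
noncomputable def pwPath {n : ℕ} (a b c : Fin n → ℂ) (t : ℝ) : Fin n → ℂ :=
  if t ≤ 1/2 then seg a b (2 * t) else seg b c (2 * t - 1)

private lemma combo_lt {a a' b b' t : ℝ} (ha : a < a') (hb : b < b')
    (h0 : 0 ≤ t) (h1 : t ≤ 1) : (1-t)*a + t*b < (1-t)*a' + t*b' := by
  rcases h0.eq_or_lt with rfl|ht
  · simpa using ha
  · exact add_lt_add_of_le_of_lt
      (mul_le_mul_of_nonneg_left ha.le (by linarith))
      (mul_lt_mul_of_pos_left hb ht)

private lemma re_combo (t : ℝ) (w v : ℂ) :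
    (((1-t : ℝ) : ℂ) * w + (t : ℂ) * v).re = (1-t) * w.re + t * v.re := by
  simp [Complex.add_re, Complex.mul_re]

private lemma im_combo (t : ℝ) (w v : ℂ) :
    (((1-t : ℝ) : ℂ) * w + (t : ℂ) * v).im = (1-t) * w.im + t * v.im := by
  simp [Complex.add_im, Complex.mul_im]

private lemma seg_mem_cell {n : ℕ} {rRe rIm : Fin n → Fin n → Prop} {x y : Fin n → ℂ}
    (hx : x ∈ cell rRe rIm) (hy : y ∈ cell rRe rIm) {t : ℝ}
    (h0 : 0 ≤ t) (h1 : t ≤ 1) : seg x y t ∈ cell rRe rIm := by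
  constructor
  · intro i j hij
    show (((1-t:ℝ):ℂ) * x i + (t:ℂ) * y i).re < (((1-t:ℝ):ℂ) * x j + (t:ℂ) * y j).re
    rw [re_combo, re_combo]
    exact combo_lt (hx.1 i j hij) (hy.1 i j hij) h0 h1
  · intro i j hij
    show (((1-t:ℝ):ℂ) * x i + (t:ℂ) * y i).im < (((1-t:ℝ):ℂ) * x j + (t:ℂ) * y j).im
    rw [im_combo, im_combo]
    exact combo_lt (hx.2 i j hij) (hy.2 i j hij) h0 h1

private lemma cell_subset_OC {n : ℕ} {rRe rIm : Fin n → Fin n → Prop}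
    (h : IsArrangement rRe rIm) {z : Fin n → ℂ} (hz : z ∈ cell rRe rIm) : z ∈ OC n := by
  intro i j heq
  by_contra hne
  rcases h.2.2.2.2 i j hne with hr|hr|hr|hr
  · have := hz.1 i j hr; rw [heq] at this; exact lt_irrefl _ this
  · have := hz.1 j i hr; rw [heq] at this; exact lt_irrefl _ this
  · have := hz.2 i j hr; rw [heq] at this; exact lt_irrefl _ this
  · have := hz.2 j i hr; rw [heq] at this; exact lt_irrefl _ this

private lemma permPoint_re {n : ℕ} (π φ : Equiv.Perm (Fin n)) (k : Fin n) :
    (permPoint π φ k).re = (π k : ℕ) + 1 := by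
  simp [permPoint]

private lemma permPoint_im {n : ℕ} (π φ : Equiv.Perm (Fin n)) (k : Fin n) :
    (permPoint π φ k).im = (φ k : ℕ) + 1 := by
  simp [permPoint]

private lemma pwPath_mem_cell {n : ℕ} {rRe rIm : Fin n → Fin n → Prop} {a b c : Fin n → ℂ}
    (ha : a ∈ cell rRe rIm) (hb : b ∈ cell rRe rIm) (hc : c ∈ cell rRe rIm) {t : ℝ}
    (h0 : 0 ≤ t) (h1 : t ≤ 1) : pwPath a b c t ∈ cell rRe rIm := by
  unfold pwPath
  split_ifs with ht
  · exact seg_mem_cell ha hb (by linarith) (by linarith)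
  · exact seg_mem_cell hb hc (by linarith) (by linarith)

private lemma seg_zero {n : ℕ} (x y : Fin n → ℂ) : seg x y 0 = x := by
  funext k; simp [seg]

private lemma seg_one {n : ℕ} (x y : Fin n → ℂ) : seg x y 1 = y := by
  funext k; simp [seg]

private lemma seg_same {n : ℕ} (x : Fin n → ℂ) (s : ℝ) : seg x x s = x := by
  funext k
  show ((1-s:ℝ):ℂ) * x k + (s:ℂ) * x k = x k
  push_cast; ring

private lemma continuous_seg_coord {n : ℕ} (x y : Fin n → ℂ) (k : Fin n) :
    Continuous fun t : ℝ => seg x y t k := by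
  unfold seg
  continuity

theorem straight_line_homotopic_pw {n : ℕ} (rRe rIm : Fin n → Fin n → Prop)
    (h : IsArrangement rRe rIm) (π φ π' φ' : Equiv.Perm (Fin n))
    (h1 : permPoint π φ ∈ cell rRe rIm) (h2 : permPoint π' φ' ∈ cell rRe rIm) :
    (∀ t ∈ Set.Icc (0:ℝ) 1, seg (permPoint π φ) (permPoint π' φ') t ∈ OC n) ∧
    (∀ t ∈ Set.Icc (0:ℝ) 1,
      pwPath (permPoint π φ) (permPoint π' φ) (permPoint π' φ') t ∈ OC n) ∧
    ∃ H : ℝ → ℝ → (Fin n → ℂ),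
      ContinuousOn (fun p : ℝ × ℝ => H p.1 p.2)
        (Set.Icc (0:ℝ) 1 ×ˢ Set.Icc (0:ℝ) 1) ∧
      (∀ s ∈ Set.Icc (0:ℝ) 1, ∀ t ∈ Set.Icc (0:ℝ) 1, H s t ∈ OC n) ∧
      (∀ t ∈ Set.Icc (0:ℝ) 1, H 0 t = seg (permPoint π φ) (permPoint π' φ') t) ∧
      (∀ t ∈ Set.Icc (0:ℝ) 1,
        H 1 t = pwPath (permPoint π φ) (permPoint π' φ) (permPoint π' φ') t) ∧
      (∀ s ∈ Set.Icc (0:ℝ) 1,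
        H s 0 = permPoint π φ ∧ H s 1 = permPoint π' φ') := by
  have hb : permPoint π' φ ∈ cell rRe rIm := by
    constructor
    · intro i j hij
      have := h2.1 i j hij
      rw [permPoint_re, permPoint_re] at this
      rw [permPoint_re, permPoint_re]
      exact this
    · intro i j hij
      have := h1.2 i j hij
      rw [permPoint_im, permPoint_im] at this
      rw [permPoint_im, permPoint_im]
      exact this
  set a := permPoint π φ with ha_def
  set b := permPoint π' φ with hb_def
  set c := permPoint π' φ' with hc_def
  refine ⟨?_, ?_, fun s t => seg (seg a c t) (pwPath a b c t) s, ?_, ?_, ?_, ?_, ?_⟩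
  · intro t ht
    exact cell_subset_OC h (seg_mem_cell h1 h2 ht.1 ht.2)
  · intro t ht
    exact cell_subset_OC h (pwPath_mem_cell h1 hb h2 ht.1 ht.2)
  · apply Continuous.continuousOn
    apply continuous_pi
    intro k
    have hY : Continuous fun p : ℝ × ℝ => pwPath a b c p.2 k := by
      have heq : (fun p : ℝ × ℝ => pwPath a b c p.2 k) =
          fun p : ℝ × ℝ => if p.2 ≤ 1/2 then seg a b (2*p.2) k else seg b c (2*p.2-1) k := by
        funext p
        unfold pwPath
        split_ifs <;> rfl
      rw [heq]
      apply Continuous.if_le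
      · exact (continuous_seg_coord a b k).comp (continuous_const.mul continuous_snd)
      · exact (continuous_seg_coord b c k).comp
          ((continuous_const.mul continuous_snd).sub continuous_const)
      · exact continuous_snd
      · exact continuous_const
      · intro p hp
        rw [hp]
        norm_num [seg]
    have hX : Continuous fun p : ℝ × ℝ => seg a c p.2 k :=
      (continuous_seg_coord a c k).comp continuous_snd
    show Continuous fun p : ℝ × ℝ =>
      ((1-p.1:ℝ):ℂ) * seg a c p.2 k + ((p.1:ℝ):ℂ) * pwPath a b c p.2 k
    exact ((Complex.continuous_ofReal.comp (continuous_const.sub continuous_fst)).mul hX).add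
      ((Complex.continuous_ofReal.comp continuous_fst).mul hY)
  · intro s hs t ht
    exact cell_subset_OC h (seg_mem_cell (seg_mem_cell h1 h2 ht.1 ht.2)
      (pwPath_mem_cell h1 hb h2 ht.1 ht.2) hs.1 hs.2)
  · intro t ht
    exact seg_zero _ _
  · intro t ht
    exact seg_one _ _
  · intro s hs
    constructor
    · have h0 : pwPath a b c 0 = a := by
        unfold pwPath
        norm_num [seg_zero]
      show seg (seg a c 0) (pwPath a b c 0) s = a
      rw [seg_zero, h0, seg_same]
    · have h1' : pwPath a b c 1 = c := by
        unfold pwPath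
        norm_num
        exact seg_one b c
      show seg (seg a c 1) (pwPath a b c 1) s = c
      rw [seg_one, h1', seg_same]
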